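/- For α > 1/2 and a > 0, define I_α(a) = ∫_a^∞ (1+r²)^{−α} dr. Then for every α > 1/2 and every a > 0, 2α/(2α−1) ≤ I_α(a) / ( (1+a²) · I_{α+1}(a) ) ≤ (2α+1)/(2α−1). -/

import Mathlib

open MeasureTheory

/-- `I_α(a) = ∫_a^∞ (1+r²)^{−α} dr`. -/
noncomputable def Iint (α a : ℝ) : ℝ := ∫ r in Set.Ioi a, (1 + r ^ 2) ^ (-α)

section Aux
open Set Real Filter
variable {α a : ℝ}


lemma pos_base (r : ℝ) : (0:ℝ) < 1 + r ^ 2 := by positivity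

lemma cont_aux (β : ℝ) : Continuous (fun r : ℝ => (1 + r ^ 2) ^ (-β)) := by
  apply Continuous.rpow_const (by continuity)
  intro x; exact Or.inl (ne_of_gt (pos_base x))

lemma rpow_comp (β r : ℝ) (hβ : 0 ≤ β) (hr : 0 < r) :
    (1 + r ^ 2) ^ (-β) ≤ r ^ (-(2*β)) := by
  calc (1 + r ^ 2) ^ (-β) ≤ (r ^ 2) ^ (-β) := by
        apply rpow_le_rpow_of_nonpos (by positivity) (by linarith) (by linarith)
    _ = r ^ (-(2*β)) := by
        rw [← rpow_natCast r 2, ← rpow_mul hr.le]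
        norm_num

lemma integrableOn_aux (β a : ℝ) (hβ : 1 / 2 < β) (ha : 0 < a) :
    IntegrableOn (fun r : ℝ => (1 + r ^ 2) ^ (-β)) (Ioi a) := by
  have hmaj : IntegrableOn (fun r : ℝ => r ^ (-(2*β))) (Ioi a) :=
    integrableOn_Ioi_rpow_of_lt (by linarith) ha
  refine hmaj.mono' ((cont_aux β).aestronglyMeasurable.restrict) ?_
  filter_upwards [ae_restrict_mem measurableSet_Ioi] with r hr
  rw [Real.norm_eq_abs, abs_of_nonneg (rpow_nonneg (pos_base r).le _)]
  exact rpow_comp β r (by linarith) (ha.trans hr)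

lemma hasDeriv_aux (β r : ℝ) :
    HasDerivAt (fun r : ℝ => (1 + r ^ 2) ^ (-β)) (2 * r * -β * (1 + r ^ 2) ^ (-β - 1)) r := by
  have h1 : HasDerivAt (fun r : ℝ => 1 + r ^ 2) (2 * r) r := by
    simpa using ((hasDerivAt_pow 2 r).const_add 1)
  exact h1.rpow_const (Or.inl (ne_of_gt (pos_base r)))

lemma tendsto_base : Tendsto (fun r : ℝ => 1 + r ^ 2) atTop atTop :=
  tendsto_atTop_add_const_left _ 1 (tendsto_pow_atTop (by norm_num))

lemma tendsto_aux (β : ℝ) (hβ : 0 < β) :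
    Tendsto (fun r : ℝ => (1 + r ^ 2) ^ (-β)) atTop (nhds 0) :=
  (tendsto_rpow_neg_atTop hβ).comp tendsto_base


lemma Iint_pos (β a : ℝ) (hβ : 1 / 2 < β) (ha : 0 < a) : 0 < Iint β a := by
  rw [Iint]
  apply (setIntegral_pos_iff_support_of_nonneg_ae ?_ (integrableOn_aux β a hβ ha)).2
  · have : (Function.support fun r : ℝ => (1 + r ^ 2) ^ (-β)) = univ := by
      ext x; simp [Function.support, ne_of_gt (rpow_pos_of_pos (pos_base x) (-β))]
    rw [this, univ_inter]
    exact Measure.measure_Ioi_pos _ _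
  · filter_upwards with x using rpow_nonneg (pos_base x).le _

lemma key_aux (β r : ℝ) : (1 + r ^ 2) * (1 + r ^ 2) ^ (-β - 1) = (1 + r ^ 2) ^ (-β) := by
  have := Real.rpow_add (pos_base r) 1 (-β - 1)
  rw [rpow_one] at this
  rw [← this]
  norm_num

/-- Tendsto of `r (1+r²)^{-α}` to 0. -/
lemma tendsto_phi (hα : 1 / 2 < α) :
    Tendsto (fun r : ℝ => r * (1 + r ^ 2) ^ (-α)) atTop (nhds 0) := by
  apply squeeze_zero' (g := fun r : ℝ => r ^ (-(2*α-1)))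
  · filter_upwards [eventually_ge_atTop (0:ℝ)] with r hr
    exact mul_nonneg hr (rpow_nonneg (pos_base r).le _)
  · filter_upwards [eventually_gt_atTop (0:ℝ)] with r hr
    calc r * (1 + r ^ 2) ^ (-α) ≤ r * r ^ (-(2*α)) :=
          mul_le_mul_of_nonneg_left (rpow_comp α r (by linarith) hr) hr.le
      _ = r ^ (-(2*α-1)) := by
          rw [show -(2*α-1) = 1 + -(2*α) by ring, Real.rpow_add hr, rpow_one]
  · exact tendsto_rpow_neg_atTop (by linarith)

/-- Main integration-by-parts identity: `(2α−1) I_α = 2α I_{α+1} + a(1+a²)^{-α}`. -/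
lemma ftc_identity (hα : 1 / 2 < α) (ha : 0 < a) :
    (2 * α - 1) * Iint α a = 2 * α * Iint (α + 1) a + a * (1 + a ^ 2) ^ (-α) := by
  have hexp : (fun r : ℝ => (1 + r ^ 2) ^ (-(α+1))) = (fun r : ℝ => (1 + r ^ 2) ^ (-α - 1)) := by
    funext r; congr 1; ring
  have int1 := integrableOn_aux α a hα ha
  have int2 := integrableOn_aux (α+1) a (by linarith) ha
  rw [hexp] at int2
  have hderiv : ∀ x ∈ Ici a, HasDerivAt (fun r : ℝ => r * (1 + r ^ 2) ^ (-α))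
      ((1 - 2*α) * (1 + x ^ 2) ^ (-α) + 2 * α * (1 + x ^ 2) ^ (-α - 1)) x := by
    intro x _
    have h := (hasDerivAt_id x).mul (hasDeriv_aux α x)
    refine h.congr_deriv ?_
    have key := key_aux α x
    simp only [id_eq]
    nlinarith [key]
  have f'int : IntegrableOn (fun x : ℝ =>
      (1 - 2*α) * (1 + x ^ 2) ^ (-α) + 2 * α * (1 + x ^ 2) ^ (-α - 1)) (Ioi a) :=
    (int1.const_mul _).add (int2.const_mul _)
  have heq := integral_Ioi_of_hasDerivAt_of_tendsto' hderiv f'int (tendsto_phi hα)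
  rw [integral_add (int1.const_mul _) (int2.const_mul _), integral_const_mul,
    integral_const_mul] at heq
  have hI1 : ∫ r in Ioi a, (1 + r ^ 2) ^ (-α) = Iint α a := rfl
  have hI2 : ∫ r in Ioi a, (1 + r ^ 2) ^ (-α - 1) = Iint (α+1) a := by
    rw [Iint, hexp]
  rw [hI1, hI2] at heq
  linarith [heq]

/-- Upper bound on I_{α+1}: `I_{α+1}(a) ≤ (1+a²)^{-α}/(2αa)`. -/
lemma bound1 (hα : 1 / 2 < α) (ha : 0 < a) :
    2 * α * a * Iint (α + 1) a ≤ (1 + a ^ 2) ^ (-α) := by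
  have hα0 : (0:ℝ) < α := by linarith
  have hderiv : ∀ x ∈ Ici a, HasDerivAt (fun r : ℝ => -((1 + r ^ 2) ^ (-α)) / (2 * α))
      (x * (1 + x ^ 2) ^ (-α - 1)) x := by
    intro x _
    have h := ((hasDeriv_aux α x).neg).div_const (2 * α)
    refine h.congr_deriv ?_
    rw [div_eq_iff (ne_of_gt (by linarith))]
    ring
  have hpos : ∀ x ∈ Ioi a, 0 ≤ x * (1 + x ^ 2) ^ (-α - 1) := by
    intro x hx
    exact mul_nonneg (le_of_lt (ha.trans hx)) (rpow_nonneg (pos_base x).le _)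
  have htd : Tendsto (fun r : ℝ => -((1 + r ^ 2) ^ (-α)) / (2 * α)) atTop (nhds 0) := by
    have := ((tendsto_aux α hα0).neg).div_const (2 * α)
    simpa using this
  have hint : IntegrableOn (fun x : ℝ => x * (1 + x ^ 2) ^ (-α - 1)) (Ioi a) :=
    integrableOn_Ioi_deriv_of_nonneg' hderiv hpos htd
  have heq := integral_Ioi_of_hasDerivAt_of_nonneg' hderiv hpos htd
  -- heq : ∫ x in Ioi a, x * (1+x²)^(-α-1) = 0 - (-(1+a²)^(-α)/(2α))
  have hexp : (fun r : ℝ => (1 + r ^ 2) ^ (-(α+1))) = (fun r : ℝ => (1 + r ^ 2) ^ (-α - 1)) := by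
    funext r; congr 1; ring
  have hmono : Iint (α + 1) a ≤ (1/a) * ∫ x in Ioi a, x * (1 + x ^ 2) ^ (-α - 1) := by
    rw [Iint, ← integral_const_mul]
    apply setIntegral_mono_on
    · rw [show (fun r : ℝ => (1 + r ^ 2) ^ (-(α+1))) = (fun r : ℝ => (1 + r ^ 2) ^ (-α - 1)) from hexp]
      exact (integrableOn_aux (α+1) a (by linarith) ha).congr_fun (fun x _ => by congr 1; ring)
        measurableSet_Ioi
    · exact hint.const_mul _
    · exact measurableSet_Ioi
    · intro x hx
      have hx0 : a < x := hx
      have hL : (0:ℝ) ≤ (1 + x ^ 2) ^ (-α - 1) := rpow_nonneg (pos_base x).le _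
      have : (1 + x ^ 2) ^ (-(α+1)) = (1 + x ^ 2) ^ (-α - 1) := by congr 1; ring
      rw [this]
      rw [show (1:ℝ)/a * (x * (1 + x ^ 2) ^ (-α - 1)) = (x/a) * (1 + x ^ 2) ^ (-α - 1) by ring]
      exact le_mul_of_one_le_left hL ((one_le_div ha).mpr hx0.le)
  rw [heq] at hmono
  have h2 : (1:ℝ)/a * (0 - -(1 + a ^ 2) ^ (-α) / (2 * α)) = (1 + a ^ 2) ^ (-α) / (2 * α * a) := by
    rw [zero_sub, neg_div, neg_neg, one_div, mul_comm, ← div_eq_mul_inv, div_div]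
  rw [h2] at hmono
  have := (le_div_iff₀ (by positivity : (0:ℝ) < 2 * α * a)).mp hmono
  linarith

/-- Lower bound on I_{α+1}: `a(1+a²)^{-α} ≤ (1+(2α+1)a²) I_{α+1}(a)`. -/
lemma bound2 (hα : 1 / 2 < α) (ha : 0 < a) :
    a * (1 + a ^ 2) ^ (-α) ≤ (1 + (2*α+1) * a ^ 2) * Iint (α + 1) a := by
  have hα0 : (0:ℝ) < α := by linarith
  set g : ℝ → ℝ := fun r => r * (1 + r ^ 2) ^ (-α) / (1 + (2*α+1) * r ^ 2) with hg
  set g' : ℝ → ℝ := fun x =>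
      (((1 + x ^ 2) ^ (-α) + x * (2 * x * -α * (1 + x ^ 2) ^ (-α - 1))) * (1 + (2*α+1) * x ^ 2)
        - (x * (1 + x ^ 2) ^ (-α)) * ((2*α+1) * (2 * x))) / (1 + (2*α+1) * x ^ 2) ^ 2 with hg'
  have hd : ∀ x : ℝ, (0:ℝ) < 1 + (2*α+1) * x ^ 2 := fun x => by positivity
  have hderiv : ∀ x ∈ Ici a, HasDerivAt g (g' x) x := by
    intro x _
    have hu : HasDerivAt (fun r : ℝ => r * (1 + r ^ 2) ^ (-α))
        (1 * (1 + x ^ 2) ^ (-α) + x * (2 * x * -α * (1 + x ^ 2) ^ (-α - 1))) x :=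
      (hasDerivAt_id x).mul (hasDeriv_aux α x)
    have hv : HasDerivAt (fun r : ℝ => 1 + (2*α+1) * r ^ 2) ((2*α+1) * (2 * x)) x := by
      have := ((hasDerivAt_pow 2 x).const_mul (2*α+1)).const_add 1
      simpa using this
    have := hu.div hv (ne_of_gt (hd x))
    refine this.congr_deriv ?_
    simp only [hg', one_mul]
  -- pointwise bounds on g'
  have hpoint : ∀ x : ℝ, -((1 + x ^ 2) ^ (-α - 1)) ≤ g' x ∧ g' x ≤ (1 + x ^ 2) ^ (-α - 1) := by
    intro x
    have hL : (0:ℝ) ≤ (1 + x ^ 2) ^ (-α - 1) := rpow_nonneg (pos_base x).le _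
    have hK : (1 + x ^ 2) * (1 + x ^ 2) ^ (-α - 1) = (1 + x ^ 2) ^ (-α) := key_aux α x
    constructor
    · rw [hg', le_div_iff₀ (by positivity : (0:ℝ) < (1 + (2*α+1) * x ^ 2) ^ 2)]
      rw [← hK]
      nlinarith [mul_nonneg hL (sq_nonneg x), mul_nonneg hL (sq_nonneg (x^2)),
        mul_nonneg (mul_nonneg hα0.le hL) (sq_nonneg x),
        mul_nonneg (mul_nonneg hα0.le hL) (sq_nonneg (x^2)),
        mul_nonneg (mul_nonneg (mul_nonneg hα0.le hα0.le) hL) (sq_nonneg (x^2))]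
    · rw [hg', div_le_iff₀ (by positivity : (0:ℝ) < (1 + (2*α+1) * x ^ 2) ^ 2)]
      rw [← hK]
      nlinarith [mul_nonneg hL (sq_nonneg x), mul_nonneg hL (sq_nonneg (x^2)),
        mul_nonneg (mul_nonneg hα0.le hL) (sq_nonneg x),
        mul_nonneg (mul_nonneg hα0.le hL) (sq_nonneg (x^2)),
        mul_nonneg (mul_nonneg (mul_nonneg hα0.le hα0.le) hL) (sq_nonneg (x^2))]
  have contL : Continuous (fun r : ℝ => (1 + r ^ 2) ^ (-α - 1)) := by
    have := cont_aux (α+1)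
    rwa [show -(α+1) = -α - 1 from by ring] at this
  have contg' : Continuous g' := by
    rw [hg']
    apply Continuous.div
    · apply Continuous.sub
      · exact ((cont_aux α).add (continuous_id.mul (((continuous_const.mul continuous_id).mul
          continuous_const).mul contL))).mul (continuous_const.add
          (continuous_const.mul (continuous_pow 2)))
      · exact (continuous_id.mul (cont_aux α)).mul
          (continuous_const.mul (continuous_const.mul continuous_id))
    · exact (continuous_const.add (continuous_const.mul (continuous_pow 2))).pow 2
    · exact fun x => ne_of_gt (by positivity)
  have int2 : IntegrableOn (fun r : ℝ => (1 + r ^ 2) ^ (-α - 1)) (Ioi a) := by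
    have := integrableOn_aux (α+1) a (by linarith) ha
    rwa [show -(α+1) = -α - 1 from by ring] at this
  have g'int : IntegrableOn g' (Ioi a) := by
    refine int2.mono' contg'.aestronglyMeasurable.restrict ?_
    filter_upwards with x
    rw [Real.norm_eq_abs, abs_le]
    exact ⟨(hpoint x).1, (hpoint x).2⟩
  have htd : Tendsto g atTop (nhds 0) := by
    apply squeeze_zero' (g := fun r : ℝ => r * (1 + r ^ 2) ^ (-α))
    · filter_upwards [eventually_ge_atTop (0:ℝ)] with r hr
      exact div_nonneg (mul_nonneg hr (rpow_nonneg (pos_base r).le _)) (hd r).le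
    · filter_upwards [eventually_ge_atTop (0:ℝ)] with r hr
      apply div_le_self (mul_nonneg hr (rpow_nonneg (pos_base r).le _))
      nlinarith [sq_nonneg r]
    · exact tendsto_phi hα
  have heq := integral_Ioi_of_hasDerivAt_of_tendsto' hderiv g'int htd
  -- g a ≤ Iint (α+1) a
  have hga : g a ≤ Iint (α + 1) a := by
    have hmono : ∫ x in Ioi a, (-(g' x)) ≤ ∫ x in Ioi a, (1 + x ^ 2) ^ (-α - 1) := by
      apply setIntegral_mono_on g'int.neg int2 measurableSet_Ioi
      intro x _
      have h := (hpoint x).1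
      simp only [Pi.neg_apply]
      linarith
    rw [integral_neg, heq] at hmono
    have : Iint (α + 1) a = ∫ x in Ioi a, (1 + x ^ 2) ^ (-α - 1) := by
      rw [Iint]
      exact setIntegral_congr_fun measurableSet_Ioi (fun x _ => by congr 1; ring)
    rw [this]
    linarith
  rw [hg] at hga
  simp only at hga
  rw [div_le_iff₀ (hd a)] at hga
  nlinarith [hga]

end Aux

/-- The two-sided bound
`2α/(2α−1) ≤ I_α(a)/((1+a²) I_{α+1}(a)) ≤ (2α+1)/(2α−1)`. -/
theorem Iint_ratio_bounds (α a : ℝ) (hα : 1 / 2 < α) (ha : 0 < a) :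
    2 * α / (2 * α - 1) ≤ Iint α a / ((1 + a ^ 2) * Iint (α + 1) a) ∧
    Iint α a / ((1 + a ^ 2) * Iint (α + 1) a) ≤ (2 * α + 1) / (2 * α - 1) := by
  have hJ : 0 < Iint (α + 1) a := Iint_pos (α+1) a (by linarith) ha
  have hden : 0 < (1 + a ^ 2) * Iint (α + 1) a := mul_pos (pos_base a) hJ
  have h1 : (0:ℝ) < 2 * α - 1 := by linarith
  have hid := ftc_identity hα ha
  have hb1 := bound1 hα ha
  have hb2 := bound2 hα ha
  constructor
  · rw [div_le_div_iff₀ h1 hden]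
    nlinarith [mul_pos hJ (mul_pos ha ha)]
  · rw [div_le_div_iff₀ hden h1]
    nlinarith [mul_pos hJ (mul_pos ha ha)]
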